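/- Let S_1, ..., S_q be finite subsets of a set X forming an antichain under inclusion, with q ≥ 2, and fix i. There is no pair of functions φ, ψ : {1,...,q}\{i} → {1,...,q}\{i} such that for all j ≠ i and all x ∈ X, (indicator S_{φ(j)} x) + (indicator S_{ψ(j)} x) ≤ (indicator S_i x) + (indicator S_j x) with φ(j), ψ(j) ∉ {i, j}. -/

import Mathlib

/-- Key step of Proposition 3.5: if the finite sets `S 1, ..., S q` (`q ≥ 2`) form an
antichain under inclusion, then for a fixed `i` there are no functions `φ, ψ` on
`{1,...,q} \ {i}` such that `φ(j), ψ(j) ∉ {i, j}` and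
`1_{S (φ j)} + 1_{S (ψ j)} ≤ 1_{S i} + 1_{S j}` pointwise (encoding
`m_{φ(j)} m_{ψ(j)} ∣ m_i m_j`) for all `j ≠ i`. -/
theorem no_phi_psi {X : Type*} [DecidableEq X] {q : ℕ} (hq : 2 ≤ q)
    (S : Fin q → Finset X) (anti : ∀ a b : Fin q, a ≠ b → ¬ S a ⊆ S b) (i : Fin q) :
    ¬ ∃ φ ψ : {j : Fin q // j ≠ i} → {j : Fin q // j ≠ i},
        ∀ j : {j : Fin q // j ≠ i},
          (φ j : Fin q) ≠ (j : Fin q) ∧ (ψ j : Fin q) ≠ (j : Fin q) ∧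
          ∀ x : X,
            (if x ∈ S (φ j : Fin q) then 1 else 0) + (if x ∈ S (ψ j : Fin q) then 1 else 0)
              ≤ (if x ∈ S i then 1 else 0) + (if x ∈ S (j : Fin q) then (1:ℕ) else 0) := by
  rintro ⟨φ, ψ, h⟩
  have hne : Nonempty {j : Fin q // j ≠ i} := by
    obtain ⟨b, hb⟩ := Fintype.exists_ne_of_one_lt_card (by rw [Fintype.card_fin]; omega) i
    exact ⟨⟨b, hb⟩⟩
  have key : ∀ j : {j : Fin q // j ≠ i},
      ((S (φ j : Fin q)) \ S i).card < ((S (j : Fin q)) \ S i).card := by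
    intro j
    obtain ⟨hφ, hψ, hx⟩ := h j
    apply Finset.card_lt_card
    constructor
    · intro x hxmem
      simp only [Finset.mem_sdiff] at hxmem ⊢
      obtain ⟨h1, h2⟩ := hxmem
      have hineq := hx x
      refine ⟨?_, h2⟩
      by_contra hj
      simp [h1, h2, hj] at hineq
    · intro hsub
      have hψne : ∃ x, x ∈ S (ψ j : Fin q) ∧ x ∉ S i := by
        by_contra hcon
        push_neg at hcon
        exact anti (ψ j : Fin q) i (ψ j).2 (fun x hx => hcon x hx)
      obtain ⟨x, hx1, hx2⟩ := hψne
      have hxj : x ∈ S (j : Fin q) := by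
        have hineq := hx x
        by_contra hj
        simp [hx1, hx2, hj] at hineq
      have hxφ : x ∈ S (φ j : Fin q) := by
        have : x ∈ S (φ j : Fin q) \ S i :=
          hsub (by simp [Finset.mem_sdiff, hxj, hx2])
        exact (Finset.mem_sdiff.mp this).1
      have hineq := hx x
      simp [hx1, hx2, hxφ, hxj] at hineq
  obtain ⟨j, -, hmin⟩ := Finset.exists_min_image Finset.univ
      (fun j : {j : Fin q // j ≠ i} => ((S (j : Fin q)) \ S i).card)
      ⟨Classical.arbitrary _, Finset.mem_univ _⟩
  exact absurd (key j) (not_lt.mpr (hmin (φ j) (Finset.mem_univ _)))
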